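/- Let F be a field of characteristic 0 and let φ ∈ F[x,y,z] be a homogeneous polynomial of degree n satisfying -2y·φ_x + z·φ_y = 0. Write φ = Σ_{k=0}^{n} φ^{n-k} z^k with each φ^{n-k} ∈ F[x,y] homogeneous of degree n-k. Then φⁿ = a·yⁿ and φ¹ = b·x for some constants a, b ∈ F, and 2y·(φ^{n-k-1})_x = (φ^{n-k})_y for all k = 0, 1, ..., n-2. -/

import Mathlib

open MvPolynomial

section Aux

variable {F : Type*} [Field F] [CharZero F]

lemma coeff_pderiv_aux {σ : Type*} [DecidableEq σ] (i : σ) (m : σ →₀ ℕ)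
    (p : MvPolynomial σ F) :
    coeff m (pderiv i p)
      = (((m + Finsupp.single i 1 : σ →₀ ℕ) i : ℕ) : F) * coeff (m + Finsupp.single i 1) p := by
  induction p using MvPolynomial.induction_on' with
  | add p q hp hq => simp [hp, hq, mul_add]
  | monomial s a =>
    rw [pderiv_monomial, coeff_monomial, coeff_monomial]
    by_cases h : s = m + Finsupp.single i 1
    · subst h
      have h1 : m + Finsupp.single i 1 - Finsupp.single i 1 = m := by
        ext j
        rw [Finsupp.tsub_apply, Finsupp.add_apply]
        omega
      rw [if_pos h1, if_pos rfl]
      have h2 : (m + Finsupp.single i 1 : σ →₀ ℕ) i = m i + 1 := by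
        rw [Finsupp.add_apply, Finsupp.single_apply, if_pos rfl]
      rw [h2]
      push_cast
      ring
    · rw [if_neg h]
      by_cases h2 : s - Finsupp.single i 1 = m
      · rw [if_pos h2]
        have hsi : s i = 0 := by
          by_contra hsi
          apply h
          ext j
          have hj := DFunLike.congr_fun h2 j
          rw [Finsupp.tsub_apply] at hj
          rw [Finsupp.add_apply]
          rcases eq_or_ne j i with rfl | hne
          · simp [Finsupp.single_apply] at hj ⊢
            omega
          · simp [Finsupp.single_apply, Ne.symm hne] at hj ⊢
            omega
        simp [hsi]
      · rw [if_neg h2, mul_zero]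

/-- A homogeneous polynomial in two variables whose partial derivative w.r.t. `i`
vanishes is a constant times a power of the other variable. -/
lemma homog_pderiv_zero_eq (p : MvPolynomial (Fin 2) F) (d : ℕ) (i j : Fin 2)
    (hij : i ≠ j) (hp : p.IsHomogeneous d) (h : pderiv i p = 0) :
    ∃ a : F, p = C a * X j ^ d := by
  refine ⟨coeff (Finsupp.single j d) p, ?_⟩
  ext m
  rw [coeff_C_mul, coeff_X_pow]
  by_cases hm : Finsupp.single j d = m
  · rw [if_pos hm, mul_one, hm]
  · rw [if_neg hm, mul_zero]
    by_cases hdeg : m.degree = d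
    · -- degree is right but m ≠ single j d, so m i ≥ 1
      have hdeg2 : m i + m j = d := by
        have : m.degree = m i + m j := by
          rw [Finsupp.degree_eq_weight_one]
          rw [show (Finsupp.weight fun _ => 1) m = m.sum fun _ n => n from ?_]
          · rw [Finsupp.sum_fintype _ _ (fun _ => rfl)]
            fin_cases i <;> fin_cases j <;> simp_all [Fin.sum_univ_two] <;> ring
          · simp [Finsupp.weight, Finsupp.linearCombination, Finsupp.sum]
        omega
      have hmi : m i ≠ 0 := by
        intro h0
        apply hm
        ext k
        have hk : k = i ∨ k = j := by omega
        rcases hk with rfl | rfl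
        · simp [Finsupp.single_apply, Ne.symm hij, h0]
        · simp [Finsupp.single_apply]
          omega
      -- use the derivative
      have hder := coeff_pderiv_aux i (m - Finsupp.single i 1) p
      rw [h] at hder
      have hsub : m - Finsupp.single i 1 + Finsupp.single i 1 = m := by
        ext k
        rw [Finsupp.add_apply, Finsupp.tsub_apply]
        rcases eq_or_ne k i with rfl | hne
        · simp [Finsupp.single_apply]
          omega
        · simp [Finsupp.single_apply, Ne.symm hne]
      rw [hsub] at hder
      have hne : ((m i : ℕ) : F) ≠ 0 := Nat.cast_ne_zero.mpr hmi
      simp only [coeff_zero] at hder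
      rcases mul_eq_zero.mp hder.symm with hc | hc
      · exact absurd hc hne
      · exact hc
    · exact hp.coeff_eq_zero hdeg

end Aux

/-- For a homogeneous solution φ = Σ_k ψ_k(x,y) z^k of -2y φ_x + z φ_y = 0 of degree n,
with ψ_k homogeneous of degree n-k, one has ψ_0 = a yⁿ, ψ_{n-1} = b x, and
2y (ψ_{k+1})_x = (ψ_k)_y for 0 ≤ k ≤ n-2. -/
theorem coefficients_of_homogeneous_solution (F : Type*) [Field F] [CharZero F]
    (n : ℕ) (hn : 1 ≤ n) (φ : MvPolynomial (Fin 3) F)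
    (ψ : ℕ → MvPolynomial (Fin 2) F)
    (hhom : φ.IsHomogeneous n)
    (hψ : ∀ k, (ψ k).IsHomogeneous (n - k))
    (hdec : φ = ∑ k ∈ Finset.range (n + 1), rename Fin.castSucc (ψ k) * X 2 ^ k)
    (hpde : -(2 * X 1 * pderiv 0 φ) + X 2 * pderiv 1 φ = 0) :
    (∃ a : F, ψ 0 = C a * X 1 ^ n) ∧
    (∃ b : F, ψ (n - 1) = C b * X 0) ∧
    (∀ k : ℕ, k + 2 ≤ n → 2 * X 1 * pderiv 0 (ψ (k + 1)) = pderiv 1 (ψ k)) := by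
  classical
  set g : Fin 3 → Polynomial (MvPolynomial (Fin 2) F) :=
    Fin.snoc (fun i => Polynomial.C (X i)) Polynomial.X with hg
  have hg2 : g 2 = Polynomial.X := by
    show g (Fin.last 2) = _
    exact Fin.snoc_last _ _
  have hg1 : g 1 = Polynomial.C (X 1) :=
    Fin.snoc_castSucc _ _ 1
  have hTren : ∀ p : MvPolynomial (Fin 2) F,
      aeval g (rename Fin.castSucc p) = Polynomial.C p := by
    intro p
    rw [aeval_rename]
    have hcomp : (g ∘ Fin.castSucc) = fun i : Fin 2 => Polynomial.C (X i) := by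
      funext i; simp [hg]
    rw [hcomp]
    induction p using MvPolynomial.induction_on with
    | C a =>
      rw [aeval_C, IsScalarTower.algebraMap_apply F (MvPolynomial (Fin 2) F)
        (Polynomial (MvPolynomial (Fin 2) F)), Polynomial.algebraMap_eq, algebraMap_eq]
    | add p q hp hq => simp [hp, hq]
    | mul_X p i hp => simp [hp]
  -- derivatives of the decomposition
  have hcast0 : Fin.castSucc (0 : Fin 2) = (0 : Fin 3) := rfl
  have hcast1 : Fin.castSucc (1 : Fin 2) = (1 : Fin 3) := rfl
  have hd : ∀ i : Fin 2, pderiv (Fin.castSucc i) φ =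
      ∑ k ∈ Finset.range (n + 1), rename Fin.castSucc (pderiv i (ψ k)) * X 2 ^ k := by
    intro i
    rw [hdec, map_sum]
    refine Finset.sum_congr rfl fun k _ => ?_
    rw [pderiv_mul, pderiv_rename (Fin.castSucc_injective 2)]
    have h1 : pderiv (Fin.castSucc i) ((X 2 : MvPolynomial (Fin 3) F) ^ k) = 0 := by
      rw [pderiv_pow, pderiv_X_of_ne, mul_zero]
      intro h
      exact absurd (congrArg Fin.val h) (by fin_cases i <;> simp)
    rw [h1, mul_zero, add_zero]
  have hd0 := hd 0
  have hd1 := hd 1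
  rw [hcast0] at hd0
  rw [hcast1] at hd1
  -- apply aeval g to the PDE
  have h := congrArg (aeval g) hpde
  rw [map_add, map_neg, map_mul, map_mul, map_mul, map_ofNat, aeval_X, aeval_X,
    hg1, hg2, hd0, hd1, map_sum, map_sum, map_zero] at h
  simp only [map_mul, hTren, map_pow, aeval_X, hg2] at h
  -- the polynomial identity
  have H : (∑ k ∈ Finset.range (n + 1),
        Polynomial.C (2 * X 1 * pderiv 0 (ψ k)) * Polynomial.X ^ k)
      = ∑ k ∈ Finset.range (n + 1),
        Polynomial.C (pderiv 1 (ψ k)) * Polynomial.X ^ (k + 1) := by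
    have e1 : (∑ k ∈ Finset.range (n + 1),
        Polynomial.C (2 * X 1 * pderiv 0 (ψ k)) * Polynomial.X ^ k)
        = 2 * Polynomial.C (X 1) *
          ∑ k ∈ Finset.range (n + 1), Polynomial.C (pderiv 0 (ψ k)) * Polynomial.X ^ k := by
      rw [Finset.mul_sum]
      refine Finset.sum_congr rfl fun k _ => ?_
      simp only [map_mul, map_ofNat]
      ring
    have e2 : (∑ k ∈ Finset.range (n + 1),
        Polynomial.C (pderiv 1 (ψ k)) * Polynomial.X ^ (k + 1))
        = Polynomial.X *
          ∑ k ∈ Finset.range (n + 1), Polynomial.C (pderiv 1 (ψ k)) * Polynomial.X ^ k := by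
      rw [Finset.mul_sum]
      refine Finset.sum_congr rfl fun k _ => ?_
      ring
    rw [e1, e2]
    linear_combination -h
  -- extract coefficients
  have hcoeffL : ∀ j : ℕ, j ≤ n →
      (∑ k ∈ Finset.range (n + 1),
        Polynomial.C (2 * X 1 * pderiv 0 (ψ k)) * Polynomial.X ^ k).coeff j
      = 2 * X 1 * pderiv 0 (ψ j) := by
    intro j hj
    rw [Polynomial.finset_sum_coeff]
    simp only [Polynomial.coeff_C_mul_X_pow]
    rw [Finset.sum_ite_eq]
    simp [Nat.lt_succ_iff, hj]
  have hcoeffR : ∀ j : ℕ, j ≤ n →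
      (∑ k ∈ Finset.range (n + 1),
        Polynomial.C (pderiv 1 (ψ k)) * Polynomial.X ^ (k + 1)).coeff j
      = if 1 ≤ j then pderiv 1 (ψ (j - 1)) else 0 := by
    intro j hj
    rw [Polynomial.finset_sum_coeff]
    simp only [Polynomial.coeff_C_mul_X_pow]
    rcases Nat.eq_zero_or_pos j with rfl | hj1
    · simp
    · obtain ⟨m, rfl⟩ := Nat.exists_eq_add_of_le hj1
      simp only [add_comm 1 m, Nat.add_left_inj]
      rw [Finset.sum_ite_eq]
      simp only [Finset.mem_range]
      rw [if_pos (by omega), if_pos (by omega)]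
      congr 2
  have key : ∀ j : ℕ, j ≤ n →
      2 * X 1 * pderiv 0 (ψ j) = if 1 ≤ j then pderiv 1 (ψ (j - 1)) else 0 := by
    intro j hj
    rw [← hcoeffL j hj, ← hcoeffR j hj, H]
  -- two X 1 nonzero
  have h2X : (2 * X 1 : MvPolynomial (Fin 2) F) ≠ 0 := by
    apply mul_ne_zero
    · exact_mod_cast (by norm_num : (2 : MvPolynomial (Fin 2) F) ≠ 0)
    · exact X_ne_zero 1
  refine ⟨?_, ?_, ?_⟩
  · -- ψ 0 = a yⁿ
    have h0 := key 0 (by omega)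
    simp only [if_neg (by omega : ¬ (1:ℕ) ≤ 0)] at h0
    have hz : pderiv 0 (ψ 0) = 0 := by
      rcases mul_eq_zero.mp h0 with hc | hc
      · exact absurd hc h2X
      · exact hc
    have := homog_pderiv_zero_eq (ψ 0) n 0 1 (by decide) (by simpa using hψ 0) hz
    exact this
  · -- ψ (n-1) = b x
    have hn' := key n (le_refl n)
    rw [if_pos hn] at hn'
    have hψn : pderiv (0 : Fin 2) (ψ n) = 0 := by
      have h0 : (ψ n).IsHomogeneous 0 := by simpa using hψ n
      ext m
      rw [coeff_pderiv_aux, coeff_zero, h0.coeff_eq_zero, mul_zero]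
      intro hdeg
      rw [Finsupp.degree_eq_zero_iff] at hdeg
      have := DFunLike.congr_fun hdeg 0
      simp at this
    rw [hψn, mul_zero] at hn'
    have := homog_pderiv_zero_eq (ψ (n - 1)) 1 1 0 (by decide)
      (by simpa [show n - (n-1) = 1 by omega] using hψ (n - 1)) hn'.symm
    simpa using this
  · intro k hk
    have := key (k + 1) (by omega)
    rw [if_pos (by omega)] at this
    simpa using this
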